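/- Let R : [0,∞) → [0,∞) be a convex nonincreasing function, let R_K ≥ 0, D_E ≥ 0, and let t ≤ l be positive integers. Then for all D_1, …, D_t ≥ 0 with ∑_{i=1}^t D_i ≤ l·D_E, it holds that ∑_{i=1}^t [R_K − R(D_i)]^+ ≤ t · sup{ λ(R_K − R(D)) : 0 ≤ λ ≤ 1, D ≥ 0, λD ≤ (l/t)·D_E }. Equivalently, t·R_K − ∑_{i=1}^t [R_K − R(D_i)]^+ ≥ t · inf{ (1−λ)R_K + λR(D) : 0 ≤ λ ≤ 1, D ≥ 0, λD ≤ (l/t)·D_E }. -/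

import Mathlib

open scoped BigOperators

/-!
STATEMENT 13: Let `R : [0,∞) → [0,∞)` be a convex nonincreasing function, `R_K ≥ 0`,
`D_E ≥ 0`, and `t ≤ l` positive integers.  Then for all `D_1, …, D_t ≥ 0` with
`∑ D_i ≤ l·D_E`,
  `∑_{i=1}^t [R_K − R(D_i)]^+ ≤ t · sup{ λ(R_K − R(D)) : 0 ≤ λ ≤ 1, D ≥ 0, λD ≤ (l/t)·D_E }`,
equivalently
  `t·R_K − ∑ [R_K − R(D_i)]^+ ≥ t · inf{ (1−λ)R_K + λR(D) : 0 ≤ λ ≤ 1, D ≥ 0, λD ≤ (l/t)·D_E }`.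
Here `[x]^+ = max(x,0)`.
-/

theorem timesharing_bound
    (R : ℝ → ℝ)
    (hconv : ConvexOn ℝ (Set.Ici (0 : ℝ)) R)
    (hmono : AntitoneOn R (Set.Ici (0 : ℝ)))
    (hnonneg : ∀ x ∈ Set.Ici (0 : ℝ), 0 ≤ R x)
    (RK DE : ℝ) (hRK : 0 ≤ RK) (hDE : 0 ≤ DE)
    (t l : ℕ) (ht : 0 < t) (htl : t ≤ l)
    (D : Fin t → ℝ) (hD : ∀ i, 0 ≤ D i)
    (hsum : ∑ i, D i ≤ (l : ℝ) * DE) :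
    (∑ i, max (RK - R (D i)) 0
        ≤ (t : ℝ) * sSup {x : ℝ | ∃ lam Dv : ℝ, 0 ≤ lam ∧ lam ≤ 1 ∧ 0 ≤ Dv ∧
            lam * Dv ≤ ((l : ℝ) / (t : ℝ)) * DE ∧ x = lam * (RK - R Dv)}) ∧
    ((t : ℝ) * sInf {x : ℝ | ∃ lam Dv : ℝ, 0 ≤ lam ∧ lam ≤ 1 ∧ 0 ≤ Dv ∧
            lam * Dv ≤ ((l : ℝ) / (t : ℝ)) * DE ∧ x = (1 - lam) * RK + lam * R Dv}
        ≤ (t : ℝ) * RK - ∑ i, max (RK - R (D i)) 0) := by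
  classical
  have htR : (0:ℝ) < (t:ℝ) := by exact_mod_cast ht
  set S : Finset (Fin t) := Finset.univ.filter (fun i => R (D i) < RK) with hSdef
  set k : ℝ := (S.card : ℝ) with hkdef
  have hk0 : 0 ≤ k := Nat.cast_nonneg _
  have hkt : k ≤ (t:ℝ) := by
    have h : S.card ≤ t := by simpa using Finset.card_le_univ S
    rw [hkdef]; exact_mod_cast h
  set lam : ℝ := k / t with hlamdef
  set Dbar : ℝ := (∑ i ∈ S, D i) / k with hDbardef
  have hsumS0 : 0 ≤ ∑ i ∈ S, D i := Finset.sum_nonneg fun i _ => hD i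
  have hDbar0 : 0 ≤ Dbar := div_nonneg hsumS0 hk0
  have hlam0 : 0 ≤ lam := div_nonneg hk0 htR.le
  have hlam1 : lam ≤ 1 := (div_le_one htR).2 hkt
  have hsumS_le : ∑ i ∈ S, D i ≤ ∑ i, D i :=
    Finset.sum_le_sum_of_subset_of_nonneg (Finset.subset_univ S) (fun i _ _ => hD i)
  have hfeas : lam * Dbar ≤ ((l : ℝ) / (t : ℝ)) * DE := by
    have h1 : lam * Dbar ≤ (∑ i, D i) / t := by
      by_cases hkz : k = 0
      · have hSe : S = ∅ := by
          have h0 : S.card = 0 := by rw [hkdef] at hkz; exact_mod_cast hkz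
          exact Finset.card_eq_zero.mp h0
        have : lam * Dbar = 0 := by
          simp [hlamdef, hkz]
        rw [this]
        exact div_nonneg (Finset.sum_nonneg fun i _ => hD i) htR.le
      · have : lam * Dbar = (∑ i ∈ S, D i) / t := by
          rw [hlamdef, hDbardef, div_mul_div_comm, mul_comm k, mul_div_mul_right _ _ hkz]
        rw [this]
        gcongr
    have h2 : (∑ i, D i) / t ≤ ((l : ℝ) * DE) / t := by gcongr
    calc lam * Dbar ≤ (∑ i, D i) / t := h1
      _ ≤ ((l:ℝ) * DE) / t := h2
      _ = ((l : ℝ) / (t : ℝ)) * DE := by ring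
  -- Jensen
  have hJ : k * R Dbar ≤ ∑ i ∈ S, R (D i) := by
    rcases Finset.eq_empty_or_nonempty S with hS | hS
    · simp [hS, hkdef]
    · have hknat : 0 < S.card := Finset.card_pos.mpr hS
      have hkpos : (0:ℝ) < k := by rw [hkdef]; exact_mod_cast hknat
      have hcm := hconv.map_centerMass_le (t := S) (w := fun _ => (1:ℝ))
        (fun i _ => zero_le_one)
        (by rw [Finset.sum_const, nsmul_eq_mul, mul_one]; exact_mod_cast hknat)
        (fun i _ => hD i)
      have hcmass : S.centerMass (fun _ => (1:ℝ)) D = Dbar := by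
        simp [Finset.centerMass, hDbardef, hkdef, div_eq_inv_mul]
      have hcmass2 : S.centerMass (fun _ => (1:ℝ)) (R ∘ D) = (∑ i ∈ S, R (D i)) / k := by
        simp [Finset.centerMass, hkdef, div_eq_inv_mul]
      rw [hcmass] at hcm
      have : R Dbar ≤ (∑ i ∈ S, R (D i)) / k := by
        rw [← hcmass2]; exact hcm
      calc k * R Dbar ≤ k * ((∑ i ∈ S, R (D i)) / k) :=
            mul_le_mul_of_nonneg_left this hk0
        _ = ∑ i ∈ S, R (D i) := by field_simp
  -- rewrite the sum of maxes
  have hmax : ∑ i, max (RK - R (D i)) 0 = ∑ i ∈ S, (RK - R (D i)) := by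
    rw [← Finset.sum_filter_add_sum_filter_not Finset.univ (fun i => R (D i) < RK)
      (fun i => max (RK - R (D i)) 0)]
    have h1 : ∑ i ∈ S, max (RK - R (D i)) 0 = ∑ i ∈ S, (RK - R (D i)) := by
      apply Finset.sum_congr rfl
      intro i hi
      have : R (D i) < RK := (Finset.mem_filter.mp hi).2
      exact max_eq_left (by linarith)
    have h2 : ∑ i ∈ Finset.univ.filter (fun i => ¬ R (D i) < RK),
        max (RK - R (D i)) 0 = 0 := by
      apply Finset.sum_eq_zero
      intro i hi
      have : ¬ R (D i) < RK := (Finset.mem_filter.mp hi).2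
      exact max_eq_right (by linarith)
    rw [h1, h2, add_zero]
  have htlam : (t:ℝ) * lam = k := by rw [hlamdef, mul_div_cancel₀ _ htR.ne']
  have hkey : ∑ i, max (RK - R (D i)) 0 ≤ (t:ℝ) * (lam * (RK - R Dbar)) := by
    rw [hmax, Finset.sum_sub_distrib, Finset.sum_const, nsmul_eq_mul, ← hkdef,
      ← mul_assoc, htlam]
    nlinarith [hJ]
  have hxmem : lam * (RK - R Dbar) ∈ {x : ℝ | ∃ lam Dv : ℝ, 0 ≤ lam ∧ lam ≤ 1 ∧ 0 ≤ Dv ∧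
      lam * Dv ≤ ((l : ℝ) / (t : ℝ)) * DE ∧ x = lam * (RK - R Dv)} :=
    ⟨lam, Dbar, hlam0, hlam1, hDbar0, hfeas, rfl⟩
  have hbddA : BddAbove {x : ℝ | ∃ lam Dv : ℝ, 0 ≤ lam ∧ lam ≤ 1 ∧ 0 ≤ Dv ∧
      lam * Dv ≤ ((l : ℝ) / (t : ℝ)) * DE ∧ x = lam * (RK - R Dv)} := by
    refine ⟨RK, ?_⟩
    rintro x ⟨a, d, ha0, ha1, hd0, -, rfl⟩
    have hRd : 0 ≤ R d := hnonneg d hd0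
    nlinarith
  have hymem : (1 - lam) * RK + lam * R Dbar ∈ {x : ℝ | ∃ lam Dv : ℝ, 0 ≤ lam ∧ lam ≤ 1 ∧ 0 ≤ Dv ∧
      lam * Dv ≤ ((l : ℝ) / (t : ℝ)) * DE ∧ x = (1 - lam) * RK + lam * R Dv} :=
    ⟨lam, Dbar, hlam0, hlam1, hDbar0, hfeas, rfl⟩
  have hbddB : BddBelow {x : ℝ | ∃ lam Dv : ℝ, 0 ≤ lam ∧ lam ≤ 1 ∧ 0 ≤ Dv ∧
      lam * Dv ≤ ((l : ℝ) / (t : ℝ)) * DE ∧ x = (1 - lam) * RK + lam * R Dv} := by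
    refine ⟨0, ?_⟩
    rintro x ⟨a, d, ha0, ha1, hd0, -, rfl⟩
    have hRd : 0 ≤ R d := hnonneg d hd0
    nlinarith
  constructor
  · calc ∑ i, max (RK - R (D i)) 0 ≤ (t:ℝ) * (lam * (RK - R Dbar)) := hkey
      _ ≤ (t:ℝ) * sSup _ :=
        mul_le_mul_of_nonneg_left (le_csSup hbddA hxmem) htR.le
  · have h1 : sInf {x : ℝ | ∃ lam Dv : ℝ, 0 ≤ lam ∧ lam ≤ 1 ∧ 0 ≤ Dv ∧
        lam * Dv ≤ ((l : ℝ) / (t : ℝ)) * DE ∧ x = (1 - lam) * RK + lam * R Dv}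
        ≤ (1 - lam) * RK + lam * R Dbar := csInf_le hbddB hymem
    have h2 : (t:ℝ) * ((1 - lam) * RK + lam * R Dbar)
        = (t:ℝ) * RK - (t:ℝ) * (lam * (RK - R Dbar)) := by ring
    nlinarith [mul_le_mul_of_nonneg_left h1 htR.le]
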